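/- Let (W,S) be a Coxeter system and I_• = [I_0,…,I_d] a singlestep expression expressing the (I_0,I_d)-coset p. Then for every (I_0,I_d)-coset q with q ≤ p in the Bruhat order, there exists a path subordinate to I_• with terminus q. Hence the set of termini of paths subordinate to I_• equals {q : q ≤ p}. -/

import Mathlib

namespace CoxeterPaper

open CoxeterSystem

variable {B : Type*} {W : Type*} [Group W] {M : CoxeterMatrix B}

/-- The Bruhat order on a Coxeter group: the reflexive-transitive closure of the
relation `a < a * t` for `t` a reflection with length increasing. -/
def BruhatLE (cs : CoxeterSystem M W) (x y : W) : Prop :=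
  Relation.ReflTransGen
    (fun a b => (∃ t, cs.IsReflection t ∧ b = a * t) ∧ cs.length a < cs.length b) x y

/-- One step of the Demazure product with a simple reflection. -/
noncomputable def demStep (cs : CoxeterSystem M W) (x : W) (i : B) : W :=
  if cs.length x < cs.length (x * cs.simple i) then x * cs.simple i else x

/-- The Demazure product of `x` with the word `l`. -/
noncomputable def demWord (cs : CoxeterSystem M W) (x : W) (l : List B) : W :=
  l.foldl (demStep cs) x

/-- The Demazure product (Coxeter monoid product) of two elements: fold the
Demazure action of a reduced word of `y` onto `x`. -/
noncomputable def dem (cs : CoxeterSystem M W) (x y : W) : W :=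
  demWord cs x (Classical.choose (cs.exists_reduced_word y))

/-- The standard parabolic subgroup attached to a set of simple indices. -/
def parabolic (cs : CoxeterSystem M W) (I : Set B) : Subgroup W :=
  Subgroup.closure (cs.simple '' I)

/-- `I` is finitary if the parabolic subgroup `W_I` is finite. -/
def Finitary (cs : CoxeterSystem M W) (I : Set B) : Prop :=
  (parabolic cs I : Set W).Finite

/-- The double coset `W_I w W_J` as a subset of `W`. -/
def doset (cs : CoxeterSystem M W) (I J : Set B) (w : W) : Set W :=
  {x | ∃ a ∈ parabolic cs I, ∃ b ∈ parabolic cs J, x = a * w * b}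

/-- `p` is an `(I,J)`-double coset. -/
def IsDCoset (cs : CoxeterSystem M W) (I J : Set B) (p : Set W) : Prop :=
  ∃ w, p = doset cs I J w

/-- `m` is the Bruhat-minimal element of `p`. -/
def IsMinOf (cs : CoxeterSystem M W) (p : Set W) (m : W) : Prop :=
  m ∈ p ∧ ∀ x ∈ p, BruhatLE cs m x

/-- `m` is the Bruhat-maximal element of `p`. -/
def IsMaxOf (cs : CoxeterSystem M W) (p : Set W) (m : W) : Prop :=
  m ∈ p ∧ ∀ x ∈ p, BruhatLE cs x m

/-- `[I 0, …, I d]` is a singlestep expression. -/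
def IsSinglestep (I : ℕ → Set B) (d : ℕ) : Prop :=
  ∀ k < d, (∃ s, s ∉ I k ∧ I (k + 1) = insert s (I k)) ∨
    (∃ s, s ∈ I k ∧ I (k + 1) = I k \ {s})

/-- `p` is a path subordinate to the singlestep expression `[I 0, …, I d]`. -/
def IsSubPath (cs : CoxeterSystem M W) (I : ℕ → Set B) (d : ℕ) (p : ℕ → Set W) : Prop :=
  p 0 = doset cs (I 0) (I 0) 1 ∧
  (∀ i ≤ d, IsDCoset cs (I 0) (I i) (p i)) ∧
  ∀ k < d, (I k ⊆ I (k + 1) → p k ⊆ p (k + 1)) ∧ (I (k + 1) ⊆ I k → p (k + 1) ⊆ p k)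

/-- The Demazure product `w_{I_0} * w_{I_1} * ⋯ * w_{I_d}` of the longest elements
`wI 0, …, wI d`. -/
noncomputable def exprMax (cs : CoxeterSystem M W) (wI : ℕ → W) (d : ℕ) : W :=
  ((List.range d).map fun k => wI (k + 1)).foldl (dem cs) (wI 0)


section Aux

open List
open scoped Classical

noncomputable section


variable {B : Type*} {W : Type*} [Group W] {M : CoxeterMatrix B}

theorem simple_conj_eq_simple_iff (cs : CoxeterSystem M W) (i : B) (t : W) :
    cs.simple i * t * cs.simple i = cs.simple i ↔ t = cs.simple i := by
  constructor
  · intro h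
    have := congrArg (fun x => cs.simple i * x * cs.simple i) h
    simpa [mul_assoc, cs.simple_mul_simple_cancel_left, cs.simple_mul_simple_self] using this
  · rintro rfl
    simp [cs.simple_mul_simple_self]

/-- The sign-twisted conjugation action of a simple reflection on `W × ZMod 2`. -/
def bsigma (cs : CoxeterSystem M W) (i : B) : Equiv.Perm (W × ZMod 2) :=
  Function.Involutive.toPerm
    (fun p => (cs.simple i * p.1 * cs.simple i, p.2 + if p.1 = cs.simple i then 1 else 0))
    (by
      rintro ⟨t, e⟩
      simp only [Prod.mk.injEq]
      refine ⟨by simp [mul_assoc, cs.simple_mul_simple_cancel_left,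
        cs.simple_mul_simple_cancel_right], ?_⟩
      rw [simple_conj_eq_simple_iff]
      rcases eq_or_ne t (cs.simple i) with rfl | h
      · simp [add_assoc, CharTwo.add_self_eq_zero]
      · simp [h])

theorem bsigma_apply (cs : CoxeterSystem M W) (i : B) (t : W) (e : ZMod 2) :
    bsigma cs i (t, e) = (cs.simple i * t * cs.simple i, e + if t = cs.simple i then 1 else 0) :=
  rfl


private theorem conj_helper {G : Type*} [Group G] {a b : G} (ha : a * a = 1) (hb : b * b = 1)
    (t : G) (r : ℕ) :
    (a * (b * t * b) * a = (b * a) ^ r * b) ↔ (t = (b * a) ^ (r + 2) * b) := by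
  have ha' : ∀ w : G, a * (a * w) = w := fun w => by rw [← mul_assoc, ha, one_mul]
  have hb' : ∀ w : G, b * (b * w) = w := fun w => by rw [← mul_assoc, hb, one_mul]
  have key : (b * a) ^ (r + 2) * b = b * (a * ((b * a) ^ r * (b * (a * b)))) := by
    calc (b * a) ^ (r + 2) * b = ((b * a) ^ r * (b * a)) * ((b * a) * b) := by
          rw [pow_add, pow_two]; simp [mul_assoc]
      _ = ((b * a) * (b * a) ^ r) * ((b * a) * b) := by rw [pow_mul_comm']
      _ = b * (a * ((b * a) ^ r * (b * (a * b)))) := by simp [mul_assoc]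
  rw [key]
  constructor
  · intro h
    have := congrArg (fun x => b * (a * (x * (a * b)))) h
    simp only [mul_assoc, ha', hb'] at this
    simpa [mul_assoc, ha, hb, ha', hb'] using this
  · intro h
    rw [h]
    simp [mul_assoc, ha, hb, ha', hb']

theorem bsigma_mul_pow_apply (cs : CoxeterSystem M W) (i j : B) (k : ℕ) (t : W) (e : ZMod 2) :
    ((bsigma cs i * bsigma cs j) ^ k) (t, e) =
      ((cs.simple i * cs.simple j) ^ k * t * ((cs.simple i * cs.simple j) ^ k)⁻¹,
        e + ∑ r ∈ Finset.range (2 * k),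
          if t = (cs.simple j * cs.simple i) ^ r * cs.simple j then 1 else 0) := by
  have ha : cs.simple i * cs.simple i = 1 := cs.simple_mul_simple_self i
  have hb : cs.simple j * cs.simple j = 1 := cs.simple_mul_simple_self j
  have hai : (cs.simple i)⁻¹ = cs.simple i := cs.inv_simple i
  have hbi : (cs.simple j)⁻¹ = cs.simple j := cs.inv_simple j
  induction k generalizing t e with
  | zero => simp
  | succ k ih =>
    rw [pow_succ, Equiv.Perm.mul_apply, Equiv.Perm.mul_apply, bsigma_apply, bsigma_apply, ih]
    simp only [Prod.mk.injEq]
    constructor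
    · simp [pow_succ, mul_inv_rev, hai, hbi, mul_assoc]
    · have h1 : ∀ r : ℕ, (cs.simple i * (cs.simple j * t * cs.simple j) * cs.simple i
          = (cs.simple j * cs.simple i) ^ r * cs.simple j)
          = (t = (cs.simple j * cs.simple i) ^ (r + 2) * cs.simple j) :=
        fun r => propext (conj_helper ha hb t r)
      have h0 : (t = cs.simple j)
          = (t = (cs.simple j * cs.simple i) ^ (0:ℕ) * cs.simple j) := by simp
      have h2 : (cs.simple j * t * cs.simple j = cs.simple i)
          = (t = (cs.simple j * cs.simple i) ^ (0+1:ℕ) * cs.simple j) := by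
        rw [pow_succ, pow_zero, one_mul]
        apply propext
        constructor
        · intro h
          have := congrArg (fun x => cs.simple j * x * cs.simple j) h
          simp only [mul_assoc, cs.simple_mul_simple_cancel_left] at this
          simpa [mul_assoc] using this
        · intro h
          rw [h]
          simp [mul_assoc, cs.simple_mul_simple_cancel_left, hb]
      simp only [h1, h0, h2]
      rw [show 2 * (k+1) = 2*k+1+1 by ring, Finset.sum_range_succ', Finset.sum_range_succ']
      simp only [show ∀ r : ℕ, r + 1 + 1 = r + 2 from fun r => rfl]
      ring

theorem bsigma_liftable (cs : CoxeterSystem M W) :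
    CoxeterMatrix.IsLiftable M (fun i => bsigma cs i) := by
  intro i j
  ext ⟨t, e⟩ : 1
  rw [bsigma_mul_pow_apply, Equiv.Perm.one_apply]
  have h1 : (cs.simple i * cs.simple j) ^ M i j = 1 := cs.simple_mul_simple_pow i j
  have h2 : (cs.simple j * cs.simple i) ^ M i j = 1 := cs.simple_mul_simple_pow' i j
  rw [h1]
  simp only [one_mul, inv_one, mul_one]
  rw [two_mul, Finset.sum_range_add]
  have : ∀ r : ℕ, (cs.simple j * cs.simple i) ^ (M i j + r) = (cs.simple j * cs.simple i) ^ r := by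
    intro r
    rw [pow_add, h2, one_mul]
  simp only [this]
  rw [← two_mul]
  have : ∀ x : ZMod 2, 2 * x = 0 := by decide
  rw [this]
  simp

/-- The homomorphism from `W` to permutations of `W × ZMod 2`. -/
def bPhi (cs : CoxeterSystem M W) : W →* Equiv.Perm (W × ZMod 2) :=
  cs.lift ⟨fun i => bsigma cs i, bsigma_liftable cs⟩

theorem bPhi_simple (cs : CoxeterSystem M W) (i : B) : bPhi cs (cs.simple i) = bsigma cs i :=
  cs.lift_apply_simple _ i

/-- The sign of `t` with respect to `w` (1 iff `t` is a "right inversion" counted with parity). -/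
def msign (cs : CoxeterSystem M W) (w t : W) : ZMod 2 := (bPhi cs w (t, 0)).2

theorem bPhi_apply_word (cs : CoxeterSystem M W) :
    ∀ (ω : List B) (t : W) (e : ZMod 2), bPhi cs (cs.wordProd ω) (t, e) =
      (cs.wordProd ω * t * (cs.wordProd ω)⁻¹, e + (bPhi cs (cs.wordProd ω) (t, 0)).2) := by
  intro ω
  induction ω with
  | nil =>
    intro t e
    simp
  | cons i ω ih =>
    intro t e
    have expand : ∀ e : ZMod 2, bPhi cs (cs.wordProd (i :: ω)) (t, e) =
        (cs.simple i * (cs.wordProd ω * t * (cs.wordProd ω)⁻¹) * cs.simple i,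
          (e + (bPhi cs (cs.wordProd ω) (t, 0)).2) +
            (if cs.wordProd ω * t * (cs.wordProd ω)⁻¹ = cs.simple i then 1 else 0)) := by
      intro e
      rw [cs.wordProd_cons, map_mul, Equiv.Perm.mul_apply, ih, bPhi_simple, bsigma_apply]
    rw [expand e, expand 0]
    simp only [Prod.mk.injEq]
    constructor
    · simp [cs.wordProd_cons, mul_inv_rev, cs.inv_simple, mul_assoc]
    · ring

theorem bPhi_apply (cs : CoxeterSystem M W) (w t : W) (e : ZMod 2) :
    bPhi cs w (t, e) = (w * t * w⁻¹, e + msign cs w t) := by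
  obtain ⟨ω, rfl⟩ := cs.wordProd_surjective w
  exact bPhi_apply_word cs ω t e

theorem msign_mul (cs : CoxeterSystem M W) (u v t : W) :
    msign cs (u * v) t = msign cs u (v * t * v⁻¹) + msign cs v t := by
  have : bPhi cs (u * v) (t, 0) = bPhi cs u (bPhi cs v (t, 0)) := by
    rw [map_mul, Equiv.Perm.mul_apply]
  rw [bPhi_apply, bPhi_apply, bPhi_apply] at this
  have h2 := congrArg Prod.snd this
  simp only [zero_add] at h2
  rw [h2, add_comm]

theorem msign_one (cs : CoxeterSystem M W) (t : W) : msign cs 1 t = 0 := by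
  unfold msign
  rw [map_one]
  rfl

theorem zmod2_cancel {x y : ZMod 2} (h : x + y = 0) : x = y := by revert h; revert x y; decide

theorem msign_inv_conj (cs : CoxeterSystem M W) (w t : W) :
    msign cs w⁻¹ (w * t * w⁻¹) = msign cs w t := by
  apply zmod2_cancel
  have := msign_mul cs w⁻¹ w t
  simp only [inv_mul_cancel, msign_one] at this
  exact this.symm

theorem msign_simple (cs : CoxeterSystem M W) (i : B) (x : W) :
    msign cs (cs.simple i) x = if x = cs.simple i then 1 else 0 := by
  unfold msign
  rw [bPhi_simple, bsigma_apply]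
  simp

theorem msign_reflection_self (cs : CoxeterSystem M W) {t : W} (ht : cs.IsReflection t) :
    msign cs t t = 1 := by
  obtain ⟨v, k, rfl⟩ := ht
  have assoc : v * cs.simple k * v⁻¹ = v * (cs.simple k * v⁻¹) := mul_assoc _ _ _
  rw [assoc]
  have h1 := msign_mul cs v (cs.simple k * v⁻¹) (v * (cs.simple k * v⁻¹))
  have e1 : (cs.simple k * v⁻¹) * (v * (cs.simple k * v⁻¹)) * (cs.simple k * v⁻¹)⁻¹
      = cs.simple k := by
    simp [mul_assoc, mul_inv_rev, cs.inv_simple, cs.simple_mul_simple_cancel_left]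
  have h2 := msign_mul cs (cs.simple k) v⁻¹ (v * (cs.simple k * v⁻¹))
  have e2 : v⁻¹ * (v * (cs.simple k * v⁻¹)) * v⁻¹⁻¹ = cs.simple k := by
    simp [mul_assoc]
  have e3 : msign cs v⁻¹ (v * (cs.simple k * v⁻¹)) = msign cs v (cs.simple k) := by
    have := msign_inv_conj cs v (cs.simple k)
    rw [assoc] at this
    exact this
  rw [e1] at h1
  rw [e2, e3, msign_simple] at h2
  rw [h1, h2]
  simp only [if_pos rfl]
  generalize msign cs v (cs.simple k) = x
  revert x; decide

theorem mem_rightInvSeq_of_msign (cs : CoxeterSystem M W) :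
    ∀ (ω : List B) (t : W), msign cs (cs.wordProd ω) t = 1 → t ∈ cs.rightInvSeq ω := by
  intro ω
  induction ω with
  | nil =>
    intro t h
    rw [cs.wordProd_nil, msign_one] at h
    exact absurd h (by decide)
  | cons i ω ih =>
    intro t h
    rw [cs.wordProd_cons, msign_mul, msign_simple] at h
    by_cases hx : cs.wordProd ω * t * (cs.wordProd ω)⁻¹ = cs.simple i
    · have : t = (cs.wordProd ω)⁻¹ * cs.simple i * cs.wordProd ω := by
        rw [← hx]; group
      rw [this]
      show _ ∈ (cs.wordProd ω)⁻¹ * cs.simple i * cs.wordProd ω :: cs.rightInvSeq ω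
      exact List.mem_cons_self
    · rw [if_neg hx, zero_add] at h
      show _ ∈ (cs.wordProd ω)⁻¹ * cs.simple i * cs.wordProd ω :: cs.rightInvSeq ω
      exact List.mem_cons_of_mem _ (ih t h)

theorem msign_eq_one_of_lt (cs : CoxeterSystem M W) {w t : W} (ht : cs.IsReflection t)
    (hl : cs.length (w * t) < cs.length w) : msign cs w t = 1 := by
  have hw : w = (w * t) * t := by rw [mul_assoc, ht.mul_self, mul_one]
  have e : t * t * t⁻¹ = t := by rw [ht.mul_self, one_mul, ht.inv]
  have hmut : msign cs (w * t) t = 0 := by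
    by_contra hne
    have h1 : msign cs (w * t) t = 1 := by
      have : ∀ x : ZMod 2, x ≠ 0 → x = 1 := by decide
      exact this _ hne
    obtain ⟨χ, hred, hchi⟩ := cs.exists_reduced_word' (w * t)
    rw [hchi] at h1
    have hmem := mem_rightInvSeq_of_msign cs χ t h1
    obtain ⟨j, hj, hjt⟩ := List.getElem_of_mem hmem
    have hj' : j < χ.length := by
      have := cs.length_rightInvSeq χ
      omega
    have hgetD : (cs.rightInvSeq χ).getD j 1 = t := by
      rw [List.getD_eq_getElem _ _ hj, hjt]
    have herase := cs.wordProd_mul_getD_rightInvSeq χ j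
    rw [hgetD] at herase
    have h3 : cs.length (cs.wordProd χ * t) ≤ (χ.eraseIdx j).length := by
      rw [herase]; exact cs.length_wordProd_le _
    have h4 : (χ.eraseIdx j).length + 1 = χ.length := List.length_eraseIdx_add_one hj'
    have h5 : cs.wordProd χ * t = w := by
      rw [← hchi, mul_assoc, ht.mul_self, mul_one]
    rw [h5] at h3
    have h6 : cs.length (w * t) = χ.length := by rw [hchi]; exact hred
    omega
  calc msign cs w t = msign cs ((w * t) * t) t := by rw [← hw]
    _ = msign cs (w * t) (t * t * t⁻¹) + msign cs t t := msign_mul cs _ _ _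
    _ = 0 + 1 := by rw [e, hmut, msign_reflection_self cs ht]
    _ = 1 := by decide

/-- Strong exchange property, for arbitrary (not necessarily reduced) words. -/
theorem strong_exchange (cs : CoxeterSystem M W) {ω : List B} {t : W} (ht : cs.IsReflection t)
    (hl : cs.length (cs.wordProd ω * t) < cs.length (cs.wordProd ω)) :
    ∃ j < ω.length, cs.wordProd ω * t = cs.wordProd (ω.eraseIdx j) := by
  have hmem := mem_rightInvSeq_of_msign cs ω t (msign_eq_one_of_lt cs ht hl)
  obtain ⟨j, hj, hjt⟩ := List.getElem_of_mem hmem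
  have hj' : j < ω.length := by
    have := cs.length_rightInvSeq ω
    omega
  have hgetD : (cs.rightInvSeq ω).getD j 1 = t := by
    rw [List.getD_eq_getElem _ _ hj, hjt]
  refine ⟨j, hj', ?_⟩
  rw [← hgetD]
  exact cs.wordProd_mul_getD_rightInvSeq ω j

theorem mem_leftInvSeq_of_lt (cs : CoxeterSystem M W) {ω : List B} {t : W}
    (ht : cs.IsReflection t)
    (hl : cs.length (t * cs.wordProd ω) < cs.length (cs.wordProd ω)) :
    t ∈ cs.leftInvSeq ω := by
  have h1 : cs.length (cs.wordProd ω.reverse * t) < cs.length (cs.wordProd ω.reverse) := by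
    rw [cs.wordProd_reverse]
    have e1 : cs.length ((cs.wordProd ω)⁻¹ * t) = cs.length (t * cs.wordProd ω) := by
      rw [show (cs.wordProd ω)⁻¹ * t = (t⁻¹ * cs.wordProd ω)⁻¹ by group, cs.length_inv, ht.inv]
    rw [e1, cs.length_inv]
    exact hl
  have hmem := mem_rightInvSeq_of_msign cs ω.reverse t (msign_eq_one_of_lt cs ht h1)
  rw [cs.rightInvSeq_reverse, List.mem_reverse] at hmem
  exact hmem

theorem wordProd_mem_closure (cs : CoxeterSystem M W) {I : Set B} {K : List B}
    (hK : ∀ i ∈ K, i ∈ I) : cs.wordProd K ∈ Subgroup.closure (cs.simple '' I) := by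
  induction K with
  | nil => rw [cs.wordProd_nil]; exact Subgroup.one_mem _
  | cons i K ih =>
    rw [cs.wordProd_cons]
    exact Subgroup.mul_mem _
      (Subgroup.subset_closure ⟨i, hK i List.mem_cons_self, rfl⟩)
      (ih fun j hj => hK j (List.mem_cons_of_mem i hj))

theorem exists_word_of_mem_closure (cs : CoxeterSystem M W) {I : Set B} {w : W}
    (hw : w ∈ Subgroup.closure (cs.simple '' I)) :
    ∃ K : List B, (∀ i ∈ K, i ∈ I) ∧ w = cs.wordProd K := by
  induction hw using Subgroup.closure_induction with
  | mem x hx =>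
    obtain ⟨i, hi, rfl⟩ := hx
    exact ⟨[i], by simpa using hi, by simp⟩
  | one => exact ⟨[], by simp, by simp⟩
  | mul x y _ _ hx hy =>
    obtain ⟨K1, hK1, rfl⟩ := hx
    obtain ⟨K2, hK2, rfl⟩ := hy
    refine ⟨K1 ++ K2, ?_, by rw [cs.wordProd_append]⟩
    intro i hi
    rcases List.mem_append.mp hi with h | h
    · exact hK1 i h
    · exact hK2 i h
  | inv x _ hx =>
    obtain ⟨K, hK, rfl⟩ := hx
    refine ⟨K.reverse, fun i hi => hK i (List.mem_reverse.mp hi), ?_⟩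
    rw [cs.wordProd_reverse]

theorem leftInvSeq_mem_closure (cs : CoxeterSystem M W) {I : Set B} {K : List B}
    (hK : ∀ i ∈ K, i ∈ I) {t : W} (ht : t ∈ cs.leftInvSeq K) :
    t ∈ Subgroup.closure (cs.simple '' I) := by
  obtain ⟨j, hj, hjt⟩ := List.getElem_of_mem ht
  have hj' : j < K.length := by
    have := cs.length_leftInvSeq K
    omega
  have hgetD : (cs.leftInvSeq K).getD j 1 = t := by
    rw [List.getD_eq_getElem _ _ hj, hjt]
  rw [cs.getD_leftInvSeq] at hgetD
  rw [← hgetD]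
  have htake : cs.wordProd (K.take j) ∈ Subgroup.closure (cs.simple '' I) :=
    wordProd_mem_closure cs fun i hi => hK i (List.mem_of_mem_take hi)
  have hmid : (Option.map cs.simple K[j]?).getD 1 ∈ Subgroup.closure (cs.simple '' I) := by
    rw [List.getElem?_eq_getElem hj']
    exact Subgroup.subset_closure ⟨K[j], hK _ (List.getElem_mem hj'), rfl⟩
  exact Subgroup.mul_mem _ (Subgroup.mul_mem _ htake hmid) (Subgroup.inv_mem _ htake)

/-- Letters of a reduced word of an element of a standard parabolic subgroup generate
simple reflections lying in that parabolic subgroup. -/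
theorem simple_mem_closure_of_reduced (cs : CoxeterSystem M W) {I : Set B} :
    ∀ (l : List B) (w : W), w ∈ Subgroup.closure (cs.simple '' I) → cs.IsReduced l →
      w = cs.wordProd l → ∀ i ∈ l, cs.simple i ∈ Subgroup.closure (cs.simple '' I) := by
  intro l
  induction l with
  | nil => intro w _ _ _ i hi; cases hi
  | cons i l ih =>
    intro w hw hred hwl j hj
    obtain ⟨K, hK, hwK⟩ := exists_word_of_mem_closure cs hw
    have hlen : cs.length w = l.length + 1 := by
      rw [hwl]; rw [hred]; simp
    have hsplit : cs.simple i * w = cs.wordProd l := by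
      rw [hwl, cs.wordProd_cons, ← mul_assoc, cs.simple_mul_simple_self, one_mul]
    have hlt : cs.length (cs.simple i * w) < cs.length w := by
      rw [hsplit, hlen]
      have := cs.length_wordProd_le l
      omega
    have hsi : cs.simple i ∈ Subgroup.closure (cs.simple '' I) := by
      have hlt' : cs.length (cs.simple i * cs.wordProd K) < cs.length (cs.wordProd K) := by
        rw [← hwK]; exact hlt
      exact leftInvSeq_mem_closure cs hK
        (mem_leftInvSeq_of_lt cs (cs.isReflection_simple i) hlt')
    rcases List.mem_cons.mp hj with rfl | hj'
    · exact hsi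
    · have hred' : cs.IsReduced l := by
        have := CoxeterSystem.IsReduced.drop (ω := i :: l) hred 1
        simpa using this
      have hwl' : cs.wordProd l ∈ Subgroup.closure (cs.simple '' I) := by
        rw [← hsplit]
        exact Subgroup.mul_mem _ hsi hw
      exact ih (cs.wordProd l) hwl' hred' rfl j hj'


theorem bruhat_below_wordProd (cs : CoxeterSystem M W) {L : List B} {y : W}
    (hy : ∃ Mw, Mw <+ L ∧ y = cs.wordProd Mw) {x : W} (hxy : BruhatLE cs x y) :
    ∃ N, N <+ L ∧ x = cs.wordProd N := by
  induction hxy using Relation.ReflTransGen.head_induction_on with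
  | refl => exact hy
  | head h' _ ih =>
    obtain ⟨⟨t, ht, rfl⟩, hlen⟩ := h'
    obtain ⟨N, hNL, hN⟩ := ih
    rename_i a _
    have hlt : cs.length (cs.wordProd N * t) < cs.length (cs.wordProd N) := by
      have e : cs.wordProd N * t = a := by
        rw [← hN, mul_assoc, ht.mul_self, mul_one]
      rw [e, ← hN]
      exact hlen
    obtain ⟨j, _, hj⟩ := strong_exchange cs ht hlt
    refine ⟨N.eraseIdx j, (List.eraseIdx_sublist N j).trans hNL, ?_⟩
    rw [← hj, ← hN, mul_assoc, ht.mul_self, mul_one]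

theorem demWord_sub (cs : CoxeterSystem M W) :
    ∀ (l : List B) (x : W), ∃ S, S <+ l ∧ demWord cs x l = x * cs.wordProd S := by
  intro l
  induction l with
  | nil => intro x; exact ⟨[], List.Sublist.refl _, by simp [demWord]⟩
  | cons i l ih =>
    intro x
    have hd : demWord cs x (i :: l) = demWord cs (demStep cs x i) l := rfl
    unfold demStep at hd
    by_cases h : cs.length x < cs.length (x * cs.simple i)
    · obtain ⟨S, hS, hSe⟩ := ih (x * cs.simple i)
      refine ⟨i :: S, List.Sublist.cons₂ i hS, ?_⟩
      rw [hd, if_pos h, hSe, cs.wordProd_cons, mul_assoc]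
    · obtain ⟨S, hS, hSe⟩ := ih x
      refine ⟨S, List.Sublist.cons i hS, ?_⟩
      rw [hd, if_neg h, hSe]

theorem chosen_word_spec (cs : CoxeterSystem M W) (y : W) :
    cs.IsReduced (Classical.choose (cs.exists_reduced_word y)) ∧
      y = cs.wordProd (Classical.choose (cs.exists_reduced_word y)) := by
  obtain ⟨h1, h2⟩ := Classical.choose_spec (cs.exists_reduced_word y)
  exact ⟨h1, h2⟩

theorem exprMax_succ (cs : CoxeterSystem M W) (wI : ℕ → W) (d : ℕ) :
    exprMax cs wI (d + 1) = dem cs (exprMax cs wI d) (wI (d + 1)) := by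
  unfold exprMax
  rw [List.range_succ, List.map_append, List.foldl_append]
  rfl

theorem exprMax_rep (cs : CoxeterSystem M W) (wI : ℕ → W) :
    ∀ d : ℕ, ∃ N, N <+ ((List.range (d+1)).map fun k =>
        Classical.choose (cs.exists_reduced_word (wI k))).flatten ∧
      exprMax cs wI d = cs.wordProd N := by
  intro d
  induction d with
  | zero =>
    refine ⟨Classical.choose (cs.exists_reduced_word (wI 0)), ?_, ?_⟩
    · show _ <+ (List.map _ [0]).flatten
      simp
    show wI 0 = _
    exact (chosen_word_spec cs (wI 0)).2
  | succ d ih =>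
    obtain ⟨N, hN, hNe⟩ := ih
    have hdem : dem cs (exprMax cs wI d) (wI (d+1)) =
        demWord cs (exprMax cs wI d) (Classical.choose (cs.exists_reduced_word (wI (d+1)))) := rfl
    obtain ⟨S, hS, hSe⟩ := demWord_sub cs
      (Classical.choose (cs.exists_reduced_word (wI (d+1)))) (exprMax cs wI d)
    refine ⟨N ++ S, ?_, ?_⟩
    · rw [List.range_succ (n := d+1), List.map_append, List.flatten_append]
      exact List.Sublist.append hN (by simpa using hS)
    · rw [exprMax_succ, hdem, hSe, hNe, cs.wordProd_append]

theorem flatten_take_of_tail_nil {α : Type*} (L' : List (List α)) (n : ℕ)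
    (h : ∀ i (_ : i < L'.length), n ≤ i → L'[i] = []) :
    (L'.take n).flatten = L'.flatten := by
  conv_rhs => rw [← List.take_append_drop n L']
  rw [List.flatten_append]
  have hnil : (L'.drop n).flatten = [] := by
    rw [List.flatten_eq_nil_iff]
    intro x hx
    obtain ⟨j, hj, hjx⟩ := List.getElem_of_mem hx
    rw [List.getElem_drop] at hjx
    rw [← hjx]
    exact h _ (by simp at hj; omega) (by omega)
  rw [hnil, List.append_nil]

theorem wordProd_mem_subgroup (cs : CoxeterSystem M W) {H : Subgroup W} :
    ∀ {K : List B}, (∀ i ∈ K, cs.simple i ∈ H) → cs.wordProd K ∈ H := by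
  intro K
  induction K with
  | nil => intro _; rw [cs.wordProd_nil]; exact one_mem _
  | cons i K ih =>
    intro h
    rw [cs.wordProd_cons]
    exact mul_mem (h i List.mem_cons_self) (ih fun j hj => h j (List.mem_cons_of_mem i hj))

theorem parabolic_mono (cs : CoxeterSystem M W) {I J : Set B} (h : I ⊆ J) :
    parabolic cs I ≤ parabolic cs J :=
  Subgroup.closure_mono (Set.image_mono h)

theorem doset_eq_of_mem (cs : CoxeterSystem M W) {I J : Set B} {x w : W}
    (h : x ∈ doset cs I J w) : doset cs I J x = doset cs I J w := by
  obtain ⟨a, ha, b, hb, rfl⟩ := h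
  ext y
  constructor
  · rintro ⟨a', ha', b', hb', rfl⟩
    exact ⟨a' * a, mul_mem ha' ha, b * b', mul_mem hb hb', by group⟩
  · rintro ⟨a', ha', b', hb', rfl⟩
    exact ⟨a' * a⁻¹, mul_mem ha' (inv_mem ha), b⁻¹ * b', mul_mem (inv_mem hb) hb', by group⟩

theorem doset_subset_up (cs : CoxeterSystem M W) {I0 J J' : Set B}
    (hJJ : parabolic cs J ≤ parabolic cs J') (x c : W) (hc : c ∈ parabolic cs J) :
    doset cs I0 J x ⊆ doset cs I0 J' (x * c) := by
  rintro y ⟨a, ha, b, hb, rfl⟩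
  exact ⟨a, ha, c⁻¹ * b, mul_mem (inv_mem (hJJ hc)) (hJJ hb), by group⟩

theorem doset_subset_down (cs : CoxeterSystem M W) {I0 J J' : Set B}
    (hJJ : parabolic cs J' ≤ parabolic cs J) (x c : W) (hc : c ∈ parabolic cs J) :
    doset cs I0 J' (x * c) ⊆ doset cs I0 J x := by
  rintro y ⟨a, ha, b, hb, rfl⟩
  exact ⟨a, ha, c * b, mul_mem hc (hJJ hb), by group⟩

end

end Aux

/-- Every coset `q ≤ p` is the terminus of some path subordinate to a given
singlestep expression for `p`. -/
theorem le_is_terminus (cs : CoxeterSystem M W) (I : ℕ → Set B) (d : ℕ)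
    (hss : IsSinglestep I d) (hfin : ∀ i ≤ d, Finitary cs (I i))
    (wI : ℕ → W) (hwI : ∀ i ≤ d, IsMaxOf cs (parabolic cs (I i) : Set W) (wI i))
    (P : Set W) (hP : IsDCoset cs (I 0) (I d) P) (MP : W)
    (hMP : IsMaxOf cs P MP) (hexpr : MP = exprMax cs wI d)
    (mP : W) (hmP : IsMinOf cs P mP) :
    ∀ q mq, IsDCoset cs (I 0) (I d) q → IsMinOf cs q mq → BruhatLE cs mq mP →
      ∃ p, IsSubPath cs I d p ∧ p d = q := by
  intro q mq hq hmq hle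
  classical
  set l : ℕ → List B := fun k => Classical.choose (cs.exists_reduced_word (wI k)) with hldef
  have hle2 : BruhatLE cs mq (exprMax cs wI d) := by
    rw [← hexpr]
    exact Relation.ReflTransGen.trans hle (hMP.2 mP hmP.1)
  obtain ⟨N, hNL, hmqN⟩ := bruhat_below_wordProd cs (exprMax_rep cs wI d) hle2
  rw [List.sublist_flatten_iff] at hNL
  obtain ⟨L', rfl, hblocks⟩ := hNL
  set X : ℕ → W := fun k => cs.wordProd ((L'.take k).flatten) with hXdef
  set c : ℕ → W := fun k => cs.wordProd (L'[k]?.getD []) with hcdef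
  have hXsucc : ∀ k, X (k+1) = X k * c k := by
    intro k
    show cs.wordProd ((L'.take (k+1)).flatten) = _
    rw [List.take_succ, List.flatten_append]
    rw [cs.wordProd_append]
    congr 1
    cases h : L'[k]? with
    | none => simp [hcdef, h]
    | some a => simp [hcdef, h]
  have hck : ∀ k ≤ d, c k ∈ parabolic cs (I k) := by
    intro k hk
    show cs.wordProd (L'[k]?.getD []) ∈ _
    cases h : L'[k]? with
    | none => rw [Option.getD_none, cs.wordProd_nil]; exact one_mem _
    | some a =>
      have hklen : k < L'.length := by
        by_contra hcon
        rw [List.getElem?_eq_none (by omega)] at h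
        cases h
      have hsub := hblocks k hklen
      have hblk : ((List.range (d+1)).map l)[k]? = some (l k) := by
        rw [List.getElem?_map, List.getElem?_range (by omega)]
        rfl
      rw [hblk, Option.getD_some] at hsub
      have ha' : a = L'[k] := by
        rw [List.getElem?_eq_getElem hklen] at h
        exact (Option.some.inj h).symm
      have hred := (chosen_word_spec cs (wI k)).1
      have hwp := (chosen_word_spec cs (wI k)).2
      have hwmem : wI k ∈ Subgroup.closure (cs.simple '' (I k)) := (hwI k hk).1
      have hlet := simple_mem_closure_of_reduced cs (l k) (wI k) hwmem hred hwp
      rw [Option.getD_some, ha']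
      exact wordProd_mem_subgroup cs fun i hi => hlet i (hsub.subset hi)
  have hmqX : mq = X (d+1) := by
    rw [hmqN]
    show cs.wordProd (L'.flatten) = cs.wordProd ((L'.take (d+1)).flatten)
    rw [flatten_take_of_tail_nil L' (d+1)]
    intro i hi hdi
    have hblk : ((List.range (d+1)).map l)[i]? = none := by
      apply List.getElem?_eq_none
      simp
      omega
    have := hblocks i hi
    rw [hblk, Option.getD_none] at this
    exact List.sublist_nil.mp this
  have hmq2 : mq = X d * c d := by rw [hmqX, hXsucc d]
  refine ⟨fun k => doset cs (I 0) (I k) (X k), ⟨?_, fun i _ => ⟨X i, rfl⟩, fun k hk => ⟨?_, ?_⟩⟩, ?_⟩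
  · show doset cs (I 0) (I 0) (X 0) = doset cs (I 0) (I 0) 1
    have hX0 : X 0 = 1 := by
      show cs.wordProd ((L'.take 0).flatten) = 1
      simp
    rw [hX0]
  · intro hsub
    have hstep := doset_subset_up cs (I0 := I 0) (parabolic_mono cs hsub) (X k) (c k) (hck k (le_of_lt hk))
    rw [← hXsucc k] at hstep
    exact hstep
  · intro hsub
    have hstep := doset_subset_down cs (I0 := I 0) (parabolic_mono cs hsub) (X k) (c k) (hck k (le_of_lt hk))
    rw [← hXsucc k] at hstep
    exact hstep
  · show doset cs (I 0) (I d) (X d) = q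
    obtain ⟨wq, rfl⟩ := hq
    have h1 : mq ∈ doset cs (I 0) (I d) (X d) :=
      ⟨1, one_mem _, c d, hck d le_rfl, by rw [hmq2]; group⟩
    have h2 : mq ∈ doset cs (I 0) (I d) wq := hmq.1
    rw [← doset_eq_of_mem cs h1, doset_eq_of_mem cs h2]

end CoxeterPaper
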